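/- Let A be a unital C*-algebra and let a, b ∈ A. Then the following are equivalent: (i) r(a·x) ≤ r(b·x) for all x ∈ A; (ii) ‖y·a·z‖ ≤ ‖y·b·z‖ for all y, z ∈ A. -/

import Mathlib

open Filter

private lemma sr_mul_comm' {A : Type*} [NormedRing A] [CompleteSpace A]
    [NormedAlgebra ℂ A] (u v : A) :
    spectralRadius ℂ (u * v) ≤ spectralRadius ℂ (v * u) := by
  rw [spectralRadius]
  refine iSup₂_le fun k hk => ?_
  rcases eq_or_ne k 0 with rfl | h
  · simp
  · have hk' : k ∈ spectrum ℂ (v * u) := by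
      have hmem : k ∈ spectrum ℂ (u * v) \ {0} := ⟨hk, h⟩
      rw [spectrum.nonzero_mul_comm] at hmem
      exact hmem.1
    calc (‖k‖₊ : ENNReal) ≤ ⨆ l ∈ spectrum ℂ (v * u), (‖l‖₊ : ENNReal) :=
          le_iSup₂ (f := fun l (_ : l ∈ spectrum ℂ (v * u)) => (‖l‖₊ : ENNReal)) k hk'
      _ = spectralRadius ℂ (v * u) := rfl

private lemma sr_mul_comm {A : Type*} [NormedRing A] [CompleteSpace A]
    [NormedAlgebra ℂ A] (u v : A) :
    spectralRadius ℂ (u * v) = spectralRadius ℂ (v * u) :=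
  le_antisymm (sr_mul_comm' u v) (sr_mul_comm' v u)

/-- Lemma 3.2: In a unital C*-algebra, `r(a x) ≤ r(b x)` for all `x` iff
`‖y a z‖ ≤ ‖y b z‖` for all `y, z`. -/
theorem spectralRadius_le_iff_norm_le
    {A : Type*} [NormedRing A] [StarRing A] [CStarRing A] [CompleteSpace A]
    [NormedAlgebra ℂ A] [StarModule ℂ A]
    (a b : A) :
    (∀ x : A, spectralRadius ℂ (a * x) ≤ spectralRadius ℂ (b * x)) ↔
      (∀ y z : A, ‖y * a * z‖ ≤ ‖y * b * z‖) := by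
  constructor
  · intro h y z
    rcases subsingleton_or_nontrivial A with hA | hA
    · rw [Subsingleton.elim (y * a * z) (y * b * z)]
    set c := y * a * z with hc
    set d := y * b * z with hd
    rcases eq_or_lt_of_le (norm_nonneg c) with hc0 | hc0
    · rw [← hc0]; exact norm_nonneg d
    -- ‖c‖² = r(c c*) = r(a (z z* a* y* y)) ≤ r(b (z z* a* y* y)) = r(c* d) ≤ ‖c‖‖d‖
    letI : CStarAlgebra A := ⟨⟩
    have hsa : IsSelfAdjoint (c * star c) := IsSelfAdjoint.mul_star_self c
    have h1 : (‖c‖₊ : ENNReal) * ‖c‖₊ = spectralRadius ℂ (c * star c) := by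
      rw [hsa.spectralRadius_eq_nnnorm, CStarRing.nnnorm_self_mul_star]
      push_cast; ring
    have h2 : c * star c = (y) * (a * (z * star c)) := by
      rw [hc]; noncomm_ring
    have h3 : spectralRadius ℂ (c * star c) = spectralRadius ℂ (a * (z * star c * y)) := by
      rw [h2, sr_mul_comm, mul_assoc]
    have h4 : spectralRadius ℂ (b * (z * star c * y)) = spectralRadius ℂ (star c * d) := by
      have : b * (z * star c * y) = (b * z) * (star c * y) := by noncomm_ring
      rw [this, sr_mul_comm]
      congr 1
      rw [hd]; noncomm_ring
    have h5 : spectralRadius ℂ (star c * d) ≤ (‖star c * d‖₊ : ENNReal) :=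
      spectrum.spectralRadius_le_nnnorm _
    have h6 : (‖star c * d‖₊ : ENNReal) ≤ (‖c‖₊ : ENNReal) * ‖d‖₊ := by
      rw [← ENNReal.coe_mul, ENNReal.coe_le_coe, ← nnnorm_star c]
      exact nnnorm_mul_le _ _
    have key : (‖c‖₊ : ENNReal) * ‖c‖₊ ≤ (‖c‖₊ : ENNReal) * ‖d‖₊ := by
      calc (‖c‖₊ : ENNReal) * ‖c‖₊ = spectralRadius ℂ (a * (z * star c * y)) := by
            rw [h1, h3]
        _ ≤ spectralRadius ℂ (b * (z * star c * y)) := h _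
        _ = spectralRadius ℂ (star c * d) := h4
        _ ≤ (‖c‖₊ : ENNReal) * ‖d‖₊ := h5.trans h6
    have hcne : (‖c‖₊ : ENNReal) ≠ 0 := by
      simp only [ne_eq, ENNReal.coe_eq_zero, nnnorm_eq_zero]
      intro hcz
      rw [hcz, norm_zero] at hc0
      exact lt_irrefl _ hc0
    have := (ENNReal.mul_le_mul_iff_right hcne ENNReal.coe_ne_top).mp key
    rw [ENNReal.coe_le_coe] at this
    exact this
  · intro h x
    -- termwise: ‖(a x)^n‖ ≤ ‖(b x)^n‖
    have hn : ∀ n : ℕ, ∀ w : A, ‖(a * x) ^ n * w‖ ≤ ‖(b * x) ^ n * w‖ := by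
      intro n
      induction n with
      | zero => intro w; simp
      | succ n ih =>
        intro w
        have e1 : (a * x) ^ (n + 1) * w = (a * x) ^ n * a * (x * w) := by
          rw [pow_succ]; noncomm_ring
        have e2 : (a * x) ^ n * (b * (x * w)) = (a * x) ^ n * b * (x * w) := by
          noncomm_ring
        have e3 : (b * x) ^ n * (b * x * w) = (b * x) ^ (n + 1) * w := by
          rw [pow_succ]; noncomm_ring
        calc ‖(a * x) ^ (n + 1) * w‖ = ‖(a * x) ^ n * a * (x * w)‖ := by rw [e1]
          _ ≤ ‖(a * x) ^ n * b * (x * w)‖ := h _ _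
          _ = ‖(a * x) ^ n * (b * x * w)‖ := by rw [← e2]; noncomm_ring
          _ ≤ ‖(b * x) ^ n * (b * x * w)‖ := ih _
          _ = ‖(b * x) ^ (n + 1) * w‖ := by rw [e3]
    have hn1 : ∀ n : ℕ, ‖(a * x) ^ n‖₊ ≤ ‖(b * x) ^ n‖₊ := by
      intro n
      have := hn n 1
      simpa [mul_one, ← NNReal.coe_le_coe] using this
    refine le_of_tendsto_of_tendsto'
      (spectrum.pow_nnnorm_pow_one_div_tendsto_nhds_spectralRadius (a * x))
      (spectrum.pow_nnnorm_pow_one_div_tendsto_nhds_spectralRadius (b * x))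
      fun n => ?_
    exact ENNReal.rpow_le_rpow (by exact_mod_cast hn1 n) (by positivity)
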